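/- arXiv:1107.1206 — 2 statements merged into one kernel-verified Lean document; each statement's English description precedes it below -/
import Mathlib

section
/- Let (S, Act, D) be a finite, finitely branching probabilistic automaton and define d(s,t) = inf { ε ∈ [0,1] | s ∼_ε t }, where s ∼_ε t means some ε-bisimulation relates s and t (setting d(s,t) = 1 if no such ε exists). Then d is a pseudo-metric on S: d(s,s) = 0, d(s,t) = d(t,s), and d(s,u) ≤ d(s,t) + d(t,u). -/
open Finset

noncomputable def mass {S : Type*} [Fintype S] (μ : S → ℝ) (E : Set S) : ℝ :=
  ∑ s, Set.indicator E μ s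

def relImage {S T : Type*} (R : S → T → Prop) (E : Set S) : Set T :=
  {y | ∃ x ∈ E, R x y}

def IsSubdist {S : Type*} [Fintype S] (μ : S → ℝ) : Prop :=
  (∀ s, 0 ≤ μ s) ∧ ∑ s, μ s ≤ 1

def Lift {S : Type*} [Fintype S] (ε : ℝ) (R : S → S → Prop) (μ ν : S → ℝ) : Prop :=
  ∀ E : Set S, mass μ E ≤ mass ν (relImage R E) + ε

def IsEpsSim {S Act : Type*} [Fintype S] (D : S → Act → (S → ℝ) → Prop) (ε : ℝ)
    (R : S → S → Prop) : Prop :=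
  ∀ s t, R s t → ∀ a μ, D s a μ → ∃ ν, D t a ν ∧ Lift ε R μ ν

/-- s ∼_ε t: some symmetric ε-simulation (i.e. ε-bisimulation) relates s and t. -/
def Bisim {S Act : Type*} [Fintype S] (D : S → Act → (S → ℝ) → Prop) (ε : ℝ)
    (s t : S) : Prop :=
  ∃ R : S → S → Prop, IsEpsSim D ε R ∧ (∀ x y, R x y → R y x) ∧ R s t

open scoped Classical in
/-- d(s,t) = inf { ε ∈ [0,1] | s ∼_ε t }, with d(s,t) = 1 if no such ε exists. -/
noncomputable def pdist {S Act : Type*} [Fintype S]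
    (D : S → Act → (S → ℝ) → Prop) (s t : S) : ℝ :=
  if ∃ ε ∈ Set.Icc (0:ℝ) 1, Bisim D ε s t then
    sInf {ε | ε ∈ Set.Icc (0:ℝ) 1 ∧ Bisim D ε s t}
  else 1

section Aux
variable {S Act : Type*} [Fintype S]

lemma mass_mono {μ : S → ℝ} (hμ : ∀ s, 0 ≤ μ s) {E F : Set S} (h : E ⊆ F) :
    mass μ E ≤ mass μ F := by
  apply Finset.sum_le_sum
  intro s _
  exact Set.indicator_le_indicator_of_subset h hμ s

lemma lift_comp {ε₁ ε₂ : ℝ} {R₁ R₂ Q : S → S → Prop} {μ ν ρ : S → ℝ}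
    (hρ : ∀ s, 0 ≤ ρ s) (h1 : Lift ε₁ R₁ μ ν) (h2 : Lift ε₂ R₂ ν ρ)
    (hQ : ∀ x z y, R₁ x z → R₂ z y → Q x y) : Lift (ε₁ + ε₂) Q μ ρ := by
  intro E
  have hm : mass ρ (relImage R₂ (relImage R₁ E)) ≤ mass ρ (relImage Q E) := by
    apply mass_mono hρ
    rintro y ⟨z, ⟨x, hx, hxz⟩, hzy⟩
    exact ⟨x, hx, hQ x z y hxz hzy⟩
  have := h1 E
  have := h2 (relImage R₁ E)
  linarith

lemma bisim_refl (D : S → Act → (S → ℝ) → Prop) (s : S) : Bisim D 0 s s := by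
  refine ⟨Eq, ?_, fun x y h => h.symm, rfl⟩
  rintro x y rfl a μ hμ
  refine ⟨μ, hμ, fun E => ?_⟩
  have : relImage (Eq : S → S → Prop) E = E := by
    ext y; constructor
    · rintro ⟨x, hx, rfl⟩; exact hx
    · intro hy; exact ⟨y, hy, rfl⟩
  rw [this]
  linarith

lemma bisim_symm {D : S → Act → (S → ℝ) → Prop} {ε : ℝ} {s t : S}
    (h : Bisim D ε s t) : Bisim D ε t s := by
  obtain ⟨R, hR, hsym, hst⟩ := h
  exact ⟨R, hR, hsym, hsym _ _ hst⟩

lemma bisim_comp {D : S → Act → (S → ℝ) → Prop}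
    (hD : ∀ s a μ, D s a μ → IsSubdist μ) {ε₁ ε₂ : ℝ} {s t u : S}
    (h1 : Bisim D ε₁ s t) (h2 : Bisim D ε₂ t u) : Bisim D (ε₁ + ε₂) s u := by
  obtain ⟨R₁, hR₁, hsym₁, hst⟩ := h1
  obtain ⟨R₂, hR₂, hsym₂, htu⟩ := h2
  refine ⟨fun x y => (∃ z, R₁ x z ∧ R₂ z y) ∨ (∃ z, R₂ x z ∧ R₁ z y), ?_, ?_, Or.inl ⟨t, hst, htu⟩⟩
  · rintro x y (⟨z, hxz, hzy⟩ | ⟨z, hxz, hzy⟩) a μ hμ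
    · obtain ⟨ν, hν, hlift₁⟩ := hR₁ x z hxz a μ hμ
      obtain ⟨ρ, hρ, hlift₂⟩ := hR₂ z y hzy a ν hν
      refine ⟨ρ, hρ, lift_comp (hD _ _ _ hρ).1 hlift₁ hlift₂ ?_⟩
      intro p q r hpq hqr
      exact Or.inl ⟨q, hpq, hqr⟩
    · obtain ⟨ν, hν, hlift₂⟩ := hR₂ x z hxz a μ hμ
      obtain ⟨ρ, hρ, hlift₁⟩ := hR₁ z y hzy a ν hν
      refine ⟨ρ, hρ, ?_⟩
      rw [add_comm]
      refine lift_comp (hD _ _ _ hρ).1 hlift₂ hlift₁ ?_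
      intro p q r hpq hqr
      exact Or.inr ⟨q, hpq, hqr⟩
  · rintro x y (⟨z, hxz, hzy⟩ | ⟨z, hxz, hzy⟩)
    · exact Or.inr ⟨z, hsym₂ _ _ hzy, hsym₁ _ _ hxz⟩
    · exact Or.inl ⟨z, hsym₁ _ _ hzy, hsym₂ _ _ hxz⟩

open scoped Classical in
lemma pdist_mem_Icc (D : S → Act → (S → ℝ) → Prop) (s t : S) :
    pdist D s t ∈ Set.Icc (0:ℝ) 1 := by
  unfold pdist
  split_ifs with h
  · obtain ⟨ε, hε, hb⟩ := h
    have hne : {ε | ε ∈ Set.Icc (0:ℝ) 1 ∧ Bisim D ε s t}.Nonempty := ⟨ε, hε, hb⟩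
    have hbdd : BddBelow {ε | ε ∈ Set.Icc (0:ℝ) 1 ∧ Bisim D ε s t} :=
      ⟨0, fun x hx => hx.1.1⟩
    constructor
    · exact le_csInf hne fun x hx => hx.1.1
    · exact le_trans (csInf_le hbdd ⟨hε, hb⟩) hε.2
  · exact ⟨zero_le_one, le_refl 1⟩

open scoped Classical in
lemma pdist_le_of_bisim {D : S → Act → (S → ℝ) → Prop} {s t : S} {ε : ℝ}
    (hε : ε ∈ Set.Icc (0:ℝ) 1) (hb : Bisim D ε s t) : pdist D s t ≤ ε := by
  unfold pdist
  rw [if_pos ⟨ε, hε, hb⟩]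
  exact csInf_le ⟨0, fun x hx => hx.1.1⟩ ⟨hε, hb⟩

end Aux

/-- d is a pseudo-metric: reflexivity, symmetry, triangle inequality. -/
theorem pdist_pseudometric {S Act : Type*} [Fintype S]
    (D : S → Act → (S → ℝ) → Prop)
    (hD : ∀ s a μ, D s a μ → IsSubdist μ)
    (hfb : ∀ s a, {μ | D s a μ}.Finite) :
    (∀ s : S, pdist D s s = 0) ∧
    (∀ s t : S, pdist D s t = pdist D t s) ∧
    (∀ s t u : S, pdist D s u ≤ pdist D s t + pdist D t u) := by
  classical
  refine ⟨?_, ?_, ?_⟩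
  · intro s
    have h0 : Bisim D 0 s s := bisim_refl D s
    have h1 : pdist D s s ≤ 0 := pdist_le_of_bisim ⟨le_refl 0, zero_le_one⟩ h0
    exact le_antisymm h1 (pdist_mem_Icc D s s).1
  · intro s t
    have hiff : ∀ ε, Bisim D ε s t ↔ Bisim D ε t s := fun ε => ⟨bisim_symm, bisim_symm⟩
    unfold pdist
    have hset : {ε | ε ∈ Set.Icc (0:ℝ) 1 ∧ Bisim D ε s t}
        = {ε | ε ∈ Set.Icc (0:ℝ) 1 ∧ Bisim D ε t s} := by
      ext ε; simp [hiff ε]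
    have hcond : (∃ ε ∈ Set.Icc (0:ℝ) 1, Bisim D ε s t)
        ↔ (∃ ε ∈ Set.Icc (0:ℝ) 1, Bisim D ε t s) := by
      constructor
      · rintro ⟨ε, ha, hb⟩; exact ⟨ε, ha, (hiff ε).mp hb⟩
      · rintro ⟨ε, ha, hb⟩; exact ⟨ε, ha, (hiff ε).mpr hb⟩
    rw [hset]
    split_ifs with h1 h2 h2
    · rfl
    · exact absurd (hcond.mp h1) h2
    · exact absurd (hcond.mpr h2) h1
    · rfl
  · intro s t u
    by_cases h1 : ∃ ε ∈ Set.Icc (0:ℝ) 1, Bisim D ε s t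
    · by_cases h2 : ∃ ε ∈ Set.Icc (0:ℝ) 1, Bisim D ε t u
      · refine le_of_forall_pos_le_add fun η hη => ?_
        by_cases hcap : pdist D s t + pdist D t u + η ≤ 1
        · have hne1 : {ε | ε ∈ Set.Icc (0:ℝ) 1 ∧ Bisim D ε s t}.Nonempty := by
            obtain ⟨ε, hε, hb⟩ := h1; exact ⟨ε, hε, hb⟩
          have hne2 : {ε | ε ∈ Set.Icc (0:ℝ) 1 ∧ Bisim D ε t u}.Nonempty := by
            obtain ⟨ε, hε, hb⟩ := h2; exact ⟨ε, hε, hb⟩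
          have e1 : pdist D s t = sInf {ε | ε ∈ Set.Icc (0:ℝ) 1 ∧ Bisim D ε s t} := by
            unfold pdist; rw [if_pos h1]
          have e2 : pdist D t u = sInf {ε | ε ∈ Set.Icc (0:ℝ) 1 ∧ Bisim D ε t u} := by
            unfold pdist; rw [if_pos h2]
          obtain ⟨ε₁, hε₁, hlt₁⟩ := exists_lt_of_csInf_lt hne1
            (show sInf {ε | ε ∈ Set.Icc (0:ℝ) 1 ∧ Bisim D ε s t} < pdist D s t + η/2 by
              rw [← e1]; linarith)
          obtain ⟨ε₂, hε₂, hlt₂⟩ := exists_lt_of_csInf_lt hne2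
            (show sInf {ε | ε ∈ Set.Icc (0:ℝ) 1 ∧ Bisim D ε t u} < pdist D t u + η/2 by
              rw [← e2]; linarith)
          have hb : Bisim D (ε₁ + ε₂) s u := bisim_comp hD hε₁.2 hε₂.2
          have hmem : ε₁ + ε₂ ∈ Set.Icc (0:ℝ) 1 := by
            constructor
            · have := hε₁.1.1; have := hε₂.1.1; linarith
            · linarith
          calc pdist D s u ≤ ε₁ + ε₂ := pdist_le_of_bisim hmem hb
            _ ≤ pdist D s t + pdist D t u + η := by linarith
        · have := (pdist_mem_Icc D s u).2
          linarith
      · have e2 : pdist D t u = 1 := by unfold pdist; rw [if_neg h2]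
        have := (pdist_mem_Icc D s u).2
        have := (pdist_mem_Icc D s t).1
        linarith
    · have e1 : pdist D s t = 1 := by unfold pdist; rw [if_neg h1]
      have := (pdist_mem_Icc D s u).2
      have := (pdist_mem_Icc D t u).1
      linarith
end

section
/- For a finite, finitely branching probabilistic automaton, the pseudo-metric d(s,t) = inf { ε | s ∼_ε t } satisfies: d(s,t) = 0 if and only if s and t are bisimilar (0-bisimilar). -/
open Finset

lemma lift_mono {S : Type*} [Fintype S] {ε ε' : ℝ} (h : ε ≤ ε') {R : S → S → Prop}
    {μ ν : S → ℝ} (hl : Lift ε R μ ν) : Lift ε' R μ ν := fun E =>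
  (hl E).trans (by linarith)

lemma isEpsSim_mono {S Act : Type*} [Fintype S] {D : S → Act → (S → ℝ) → Prop}
    {ε ε' : ℝ} (h : ε ≤ ε') {R : S → S → Prop} (hs : IsEpsSim D ε R) :
    IsEpsSim D ε' R := by
  intro s t hst a μ hμ
  obtain ⟨ν, hν, hl⟩ := hs s t hst a μ hμ
  exact ⟨ν, hν, lift_mono h hl⟩

/-- d(s,t) = 0 iff s and t are 0-bisimilar. -/
theorem pdist_eq_zero_iff_bisim {S Act : Type*} [Fintype S]
    (D : S → Act → (S → ℝ) → Prop)
    (hD : ∀ s a μ, D s a μ → IsSubdist μ)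
    (hfb : ∀ s a, {μ | D s a μ}.Finite) :
    ∀ s t : S, pdist D s t = 0 ↔ Bisim D 0 s t := by
  classical
  intro s t
  set A := {ε | ε ∈ Set.Icc (0:ℝ) 1 ∧ Bisim D ε s t} with hA
  have hbdd : BddBelow A := ⟨0, fun x hx => hx.1.1⟩
  constructor
  · intro h
    unfold pdist at h
    split_ifs at h with hc
    swap
    · norm_num at h
    have hne : A.Nonempty := by
      obtain ⟨ε, hε1, hε2⟩ := hc
      exact ⟨ε, hε1, hε2⟩
    have key : ∀ n : ℕ, ∃ ε ∈ A, ε < 1/(n+1 : ℝ) := by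
      intro n
      have hlt : sInf A < 1/(n+1 : ℝ) := by rw [h]; positivity
      exact exists_lt_of_csInf_lt hne hlt
    choose ε hεA hεlt using key
    have hrel : ∀ n, ∃ R : S → S → Prop,
        IsEpsSim D (ε n) R ∧ (∀ x y, R x y → R y x) ∧ R s t := fun n => (hεA n).2
    choose R hRsim hRsymm hRst using hrel
    obtain ⟨R0, hfib⟩ := Finite.exists_infinite_fiber R
    have hfibInf : (R ⁻¹' {R0}).Infinite := Set.infinite_coe_iff.mp hfib
    obtain ⟨n0, hn0⟩ := hfibInf.nonempty
    have hR0 : R n0 = R0 := hn0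
    -- R0 is a δ-simulation for each δ > 0
    have hgood : ∀ δ : ℝ, 0 < δ → IsEpsSim D δ R0 := by
      intro δ hδ
      obtain ⟨m, hm⟩ := exists_nat_one_div_lt hδ
      obtain ⟨n, hn, hmn⟩ := hfibInf.exists_gt m
      have h1 : ε n < δ := by
        have h2 : (1 : ℝ)/(n+1) ≤ 1/(m+1) := by
          have hc' : (m:ℝ) ≤ n := Nat.cast_le.mpr hmn.le
          apply one_div_le_one_div_of_le <;> push_cast <;> linarith
        calc ε n < 1/(n+1 : ℝ) := hεlt n
          _ ≤ 1/(m+1) := h2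
          _ < δ := hm
      have := hRsim n
      rw [show R n = R0 from hn] at this
      exact isEpsSim_mono h1.le this
    refine ⟨R0, ?_, by rw [← hR0]; exact hRsymm n0, by rw [← hR0]; exact hRst n0⟩
    intro u v huv a μ hμ
    have hk : ∀ k : ℕ, ∃ ν, D v a ν ∧ Lift (1/(k+1 : ℝ)) R0 μ ν := by
      intro k
      exact hgood _ (by positivity) u v huv a μ hμ
    choose ν hν hLift using hk
    haveI : Finite {ν | D v a ν} := (hfb v a).to_subtype
    let f : ℕ → {ν | D v a ν} := fun k => ⟨ν k, hν k⟩
    obtain ⟨ν0, hfib2⟩ := Finite.exists_infinite_fiber f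
    have hfib2Inf : (f ⁻¹' {ν0}).Infinite := Set.infinite_coe_iff.mp hfib2
    refine ⟨ν0.1, ν0.2, ?_⟩
    intro E
    rw [add_zero]
    refine le_of_forall_pos_le_add ?_
    intro δ hδ
    obtain ⟨m, hm⟩ := exists_nat_one_div_lt hδ
    obtain ⟨k, hk', hmk⟩ := hfib2Inf.exists_gt m
    have hνk : ν k = ν0.1 := by
      have : f k = ν0 := hk'
      exact congrArg Subtype.val this
    have h2 : (1 : ℝ)/(k+1) ≤ 1/(m+1) := by
      have hc' : (m:ℝ) ≤ k := Nat.cast_le.mpr hmk.le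
      apply one_div_le_one_div_of_le <;> push_cast <;> linarith
    calc mass μ E ≤ mass (ν k) (relImage R0 E) + 1/(k+1 : ℝ) := hLift k E
      _ ≤ mass ν0.1 (relImage R0 E) + δ := by rw [hνk]; linarith
  · intro hb
    have h0 : (0 : ℝ) ∈ A := ⟨⟨le_refl 0, by norm_num⟩, hb⟩
    unfold pdist
    rw [if_pos ⟨0, h0.1, h0.2⟩]
    exact le_antisymm (csInf_le hbdd h0) (le_csInf ⟨0, h0⟩ fun x hx => hx.1.1)
end
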